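/- With J the Jacobian ring of the pencil of two generalized Fermat hypersurfaces as above, fix distinct k, l ∈ {0,…,n} and set A_j = X_j^m · X_0^{m-2}⋯X_n^{m-2} · ∏_{i ≠ j,k,l} L_i for j ∉ {k,l}. Then for distinct j, j' ∉ {k,l}: A_j = ((a_{j'}b_k − a_kb_{j'})(a_lb_{j'} − a_{j'}b_l))/((a_jb_k − a_kb_j)(a_lb_j − a_jb_l)) · A_{j'} in J. In particular the bidegree-(n−2, (n+3)m − 2(n+1)) graded piece of J is at most one-dimensional over k. -/

import Mathlib

open MvPolynomial

namespace FermatPencil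

variable {k : Type*} [Field k]

/-- The variable `Y_i` (`i = 0, 1`). -/
noncomputable def Yv (n : ℕ) (k : Type*) [Field k] (i : Fin 2) :
    MvPolynomial (Fin 2 ⊕ Fin (n + 1)) k := X (Sum.inl i)

/-- The variable `X_j`. -/
noncomputable def Xv (n : ℕ) (k : Type*) [Field k] (j : Fin (n + 1)) :
    MvPolynomial (Fin 2 ⊕ Fin (n + 1)) k := X (Sum.inr j)

/-- The linear form `L_i = a_iY_0 + b_iY_1`. -/
noncomputable def L (n : ℕ) {k : Type*} [Field k] (a b : Fin (n + 1) → k) (i : Fin (n + 1)) :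
    MvPolynomial (Fin 2 ⊕ Fin (n + 1)) k :=
  C (a i) * Yv n k 0 + C (b i) * Yv n k 1

/-- The generalized Fermat polynomial `Σ c_iX_i^m`. -/
noncomputable def fermat (n m : ℕ) {k : Type*} [Field k] (c : Fin (n + 1) → k) :
    MvPolynomial (Fin 2 ⊕ Fin (n + 1)) k :=
  ∑ i, C (c i) * Xv n k i ^ m

/-- The Jacobian ideal `(F_0, F_1, mL_0X_0^{m-1}, …, mL_nX_n^{m-1})` of the pencil
`F = Y_0F_0 + Y_1F_1` of two generalized Fermat hypersurfaces. -/
noncomputable def jacIdeal (n m : ℕ) {k : Type*} [Field k] (a b : Fin (n + 1) → k) :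
    Ideal (MvPolynomial (Fin 2 ⊕ Fin (n + 1)) k) :=
  Ideal.span ({fermat n m a, fermat n m b} ∪
    Set.range (fun i : Fin (n + 1) => C (m : k) * L n a b i * Xv n k i ^ (m - 1)))

/-- The generator `A_j = X_j^m·X_0^{m-2}⋯X_n^{m-2}·∏_{i∉{j,k,l}}L_i`. -/
noncomputable def Agen (n m : ℕ) {k : Type*} [Field k] (a b : Fin (n + 1) → k)
    (j kk l : Fin (n + 1)) : MvPolynomial (Fin 2 ⊕ Fin (n + 1)) k :=
  Xv n k j ^ m * (∏ t, Xv n k t ^ (m - 2)) *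
    ∏ i ∈ ({j, kk, l}ᶜ : Finset (Fin (n + 1))), L n a b i

section Aux

variable {n m : ℕ} {a b : Fin (n + 1) → k}

lemma fermat_mem_a : fermat n m a ∈ jacIdeal n m a b :=
  Ideal.subset_span (Or.inl (Or.inl rfl))

lemma fermat_mem_b : fermat n m b ∈ jacIdeal n m a b :=
  Ideal.subset_span (Or.inl (Or.inr rfl))

lemma cancelC {x : k} (hx : x ≠ 0) {p : MvPolynomial (Fin 2 ⊕ Fin (n + 1)) k}
    (h : C x * p ∈ jacIdeal n m a b) : p ∈ jacIdeal n m a b := by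
  have h2 := Ideal.mul_mem_left _ (C x⁻¹) h
  rwa [← mul_assoc, ← map_mul, inv_mul_cancel₀ hx, map_one, one_mul] at h2

lemma gen_mem (hmk : (m : k) ≠ 0) (i : Fin (n + 1)) :
    L n a b i * Xv n k i ^ (m - 1) ∈ jacIdeal n m a b := by
  apply cancelC hmk
  rw [← mul_assoc]
  exact Ideal.subset_span (Or.inr ⟨i, rfl⟩)

lemma XmL_mem (hmk : (m : k) ≠ 0) (hm1 : 1 ≤ m) (i : Fin (n + 1))
    (q : MvPolynomial (Fin 2 ⊕ Fin (n + 1)) k) :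
    Xv n k i ^ m * L n a b i * q ∈ jacIdeal n m a b := by
  have hp : Xv n k i ^ m = Xv n k i * Xv n k i ^ (m - 1) := by
    conv_lhs => rw [show m = 1 + (m - 1) by omega]
    rw [pow_add, pow_one]
  have : Xv n k i ^ m * L n a b i * q = (Xv n k i * q) * (L n a b i * Xv n k i ^ (m - 1)) := by
    rw [hp]; ring
  rw [this]
  exact Ideal.mul_mem_left _ _ (gen_mem hmk i)

lemma YXX_mem (hmk : (m : k) ≠ 0) (hcross : ∀ i j, i ≠ j → a i * b j - a j * b i ≠ 0)
    (s : Fin 2) {i i' : Fin (n + 1)} (hii' : i ≠ i') :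
    Yv n k s * Xv n k i ^ (m - 1) * Xv n k i' ^ (m - 1) ∈ jacIdeal n m a b := by
  have hΔ := hcross i i' hii'
  apply cancelC hΔ
  fin_cases s
  · show C (a i * b i' - a i' * b i) *
        (Yv n k 0 * Xv n k i ^ (m - 1) * Xv n k i' ^ (m - 1)) ∈ jacIdeal n m a b
    have : C (a i * b i' - a i' * b i) *
        (Yv n k 0 * Xv n k i ^ (m - 1) * Xv n k i' ^ (m - 1)) =
        (C (b i') * Xv n k i' ^ (m - 1)) * (L n a b i * Xv n k i ^ (m - 1)) -
          (C (b i) * Xv n k i ^ (m - 1)) * (L n a b i' * Xv n k i' ^ (m - 1)) := by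
      rw [L, L, map_sub, map_mul, map_mul]; ring
    rw [this]
    exact sub_mem (Ideal.mul_mem_left _ _ (gen_mem hmk i))
      (Ideal.mul_mem_left _ _ (gen_mem hmk i'))
  · show C (a i * b i' - a i' * b i) *
        (Yv n k 1 * Xv n k i ^ (m - 1) * Xv n k i' ^ (m - 1)) ∈ jacIdeal n m a b
    have : C (a i * b i' - a i' * b i) *
        (Yv n k 1 * Xv n k i ^ (m - 1) * Xv n k i' ^ (m - 1)) =
        (C (a i) * Xv n k i ^ (m - 1)) * (L n a b i' * Xv n k i' ^ (m - 1)) -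
          (C (a i') * Xv n k i' ^ (m - 1)) * (L n a b i * Xv n k i ^ (m - 1)) := by
      rw [L, L, map_sub, map_mul, map_mul]; ring
    rw [this]
    exact sub_mem (Ideal.mul_mem_left _ _ (gen_mem hmk i'))
      (Ideal.mul_mem_left _ _ (gen_mem hmk i))

lemma qYXX_mem (hmk : (m : k) ≠ 0) (hcross : ∀ i j, i ≠ j → a i * b j - a j * b i ≠ 0)
    (s : Fin 2) {i i' : Fin (n + 1)} (hii' : i ≠ i')
    (q : MvPolynomial (Fin 2 ⊕ Fin (n + 1)) k) :
    q * (Yv n k s * Xv n k i ^ (m - 1) * Xv n k i' ^ (m - 1)) ∈ jacIdeal n m a b :=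
  Ideal.mul_mem_left _ _ (YXX_mem hmk hcross s hii')



set_option maxHeartbeats 2000000 in
set_option synthInstance.maxHeartbeats 400000 in
lemma part1 (n m : ℕ) (hm : 2 ≤ m) (hmk : (m : k) ≠ 0)
    (a b : Fin (n + 1) → k) (hcross : ∀ i j, i ≠ j → a i * b j - a j * b i ≠ 0)
    (kk l j j' : Fin (n + 1)) (hkl : kk ≠ l)
    (hj : j ≠ kk ∧ j ≠ l) (hj' : j' ≠ kk ∧ j' ≠ l) (hjj' : j ≠ j') :
    Ideal.Quotient.mk (jacIdeal n m a b) (Agen n m a b j kk l) =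
      Ideal.Quotient.mk (jacIdeal n m a b)
        (C (((a j' * b kk - a kk * b j') * (a l * b j' - a j' * b l)) /
            ((a j * b kk - a kk * b j) * (a l * b j - a j * b l))) *
          Agen n m a b j' kk l) := by
  obtain ⟨hjkk, hjl⟩ := hj
  obtain ⟨hj'kk, hj'l⟩ := hj'
  set φ := Ideal.Quotient.mk (jacIdeal n m a b) with hφ
  set ψ : k →+* MvPolynomial (Fin 2 ⊕ Fin (n + 1)) k ⧸ jacIdeal n m a b :=
    φ.comp (C : k →+* MvPolynomial (Fin 2 ⊕ Fin (n + 1)) k) with hψ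
  set S : Finset (Fin (n + 1)) := {j, j', kk, l} with hS
  set P := (∏ t, Xv n k t ^ (m - 2)) * ∏ i ∈ Sᶜ, L n a b i with hP
  set u : Fin (n + 1) → Fin 2 → MvPolynomial (Fin 2 ⊕ Fin (n + 1)) k ⧸ jacIdeal n m a b :=
    fun i s => φ (Xv n k i ^ m * Yv n k s * P) with hu
  -- relation H_i
  have hH : ∀ i : Fin (n + 1), ψ (a i) * u i 0 + ψ (b i) * u i 1 = 0 := by
    intro i
    have h0 : C (a i) * (Xv n k i ^ m * Yv n k 0 * P) + C (b i) * (Xv n k i ^ m * Yv n k 1 * P)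
        = Xv n k i ^ m * L n a b i * P := by rw [L]; ring
    have h1 : φ (Xv n k i ^ m * L n a b i * P) = 0 :=
      Ideal.Quotient.eq_zero_iff_mem.mpr (XmL_mem hmk (by omega) i P)
    rw [hψ, hu]
    simp only [RingHom.coe_comp, Function.comp_apply, ← map_mul, ← map_add, h0, h1]
  -- vanishing outside S
  have hZ : ∀ i ∈ Sᶜ, ∀ s, u i s = 0 := by
    intro i hi s
    have hsplit : ∏ i' ∈ Sᶜ, L n a b i' = L n a b i * ∏ i' ∈ Sᶜ.erase i, L n a b i' :=
      (Finset.mul_prod_erase _ _ hi).symm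
    have h2 : Xv n k i ^ m * Yv n k s * P = Xv n k i ^ m * L n a b i *
        (Yv n k s * (∏ t, Xv n k t ^ (m - 2)) * ∏ i' ∈ Sᶜ.erase i, L n a b i') := by
      rw [hP, hsplit]; ring
    rw [hu]
    simp only [h2]
    exact Ideal.Quotient.eq_zero_iff_mem.mpr (XmL_mem hmk (by omega) i _)
  -- sum restriction
  have hrestrict : ∀ f : Fin (n + 1) → MvPolynomial (Fin 2 ⊕ Fin (n + 1)) k ⧸ jacIdeal n m a b,
      (∀ i ∈ Sᶜ, f i = 0) → ∑ i, f i = f j + (f j' + (f kk + f l)) := by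
    intro f hf
    rw [← Finset.sum_add_sum_compl S f, Finset.sum_eq_zero hf, add_zero, hS]
    rw [Finset.sum_insert (by simp [hjj', hjkk, hjl]),
      Finset.sum_insert (by simp [hj'kk, hj'l]),
      Finset.sum_insert (by simp [hkl]), Finset.sum_singleton]
  -- fermat relations
  have hferm : ∀ c : Fin (n + 1) → k, fermat n m c ∈ jacIdeal n m a b → ∀ s,
      ψ (c j) * u j s + (ψ (c j') * u j' s + (ψ (c kk) * u kk s + ψ (c l) * u l s)) = 0 := by
    intro c hc s
    have h1 : fermat n m c * (Yv n k s * P) = ∑ i, C (c i) * (Xv n k i ^ m * Yv n k s * P) := by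
      rw [fermat, Finset.sum_mul]; exact Finset.sum_congr rfl fun i _ => by ring
    have h2 : φ (fermat n m c * (Yv n k s * P)) = 0 :=
      Ideal.Quotient.eq_zero_iff_mem.mpr (Ideal.mul_mem_right _ _ hc)
    rw [h1, map_sum] at h2
    have h3 : ∀ i, φ (C (c i) * (Xv n k i ^ m * Yv n k s * P)) = ψ (c i) * u i s := by
      intro i; rw [hψ, hu]; simp only [RingHom.coe_comp, Function.comp_apply, map_mul]
    rw [Finset.sum_congr rfl fun i _ => h3 i] at h2
    rw [← hrestrict (fun i => ψ (c i) * u i s) (fun i hi => by show ψ (c i) * u i s = 0; rw [hZ i hi s, mul_zero])]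
    exact h2
  have ea0 := hferm a fermat_mem_a 0
  have ea1 := hferm a fermat_mem_a 1
  have eb0 := hferm b fermat_mem_b 0
  -- main linear combination
  have main :
      (ψ (a j) * ψ (b kk) - ψ (a kk) * ψ (b j)) * (ψ (a j) * ψ (b l) - ψ (a l) * ψ (b j)) *
          (ψ (a j') * u j 0 + ψ (b j') * u j 1) =
        (ψ (a j') * ψ (b kk) - ψ (a kk) * ψ (b j')) * (ψ (a j') * ψ (b l) - ψ (a l) * ψ (b j')) *
          (ψ (a j) * u j' 0 + ψ (b j) * u j' 1) := by
    linear_combination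
      ((ψ (a j') * ψ (b j) - ψ (a j) * ψ (b j')) * (-(ψ (a kk) * ψ (b l) + ψ (a l) * ψ (b kk)))) * ea0 +
      ((ψ (a j') * ψ (b j) - ψ (a j) * ψ (b j')) * (-(ψ (b kk) * ψ (b l)))) * ea1 +
      ((ψ (a j') * ψ (b j) - ψ (a j) * ψ (b j')) * (ψ (a kk) * ψ (a l))) * eb0 +
      ((ψ (a j') * ψ (b j) - ψ (a j) * ψ (b j')) * (ψ (a kk) * ψ (b l))) * (hH kk) +
      ((ψ (a j') * ψ (b j) - ψ (a j) * ψ (b j')) * (ψ (a l) * ψ (b kk))) * (hH l) +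
      (ψ (a kk) * ψ (a l) * ψ (b j) * ψ (b j') + ψ (a j) * ψ (a j') * ψ (b kk) * ψ (b l)
        - ψ (a j) * ψ (a l) * ψ (b j') * ψ (b kk) - ψ (a j) * ψ (a kk) * ψ (b j') * ψ (b l)) * (hH j) +
      (-(ψ (a kk) * ψ (a l) * ψ (b j) * ψ (b j') + ψ (a j) * ψ (a j') * ψ (b kk) * ψ (b l)
        - ψ (a j') * ψ (a kk) * ψ (b j) * ψ (b l) - ψ (a j') * ψ (a l) * ψ (b j) * ψ (b kk))) * (hH j')
  -- Agen expansions
  have hcompl : ({j, kk, l}ᶜ : Finset (Fin (n + 1))) = insert j' Sᶜ := by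
    ext x
    simp only [hS, Finset.mem_compl, Finset.mem_insert, Finset.mem_singleton]
    constructor
    · intro hx
      by_cases hxj' : x = j'
      · exact Or.inl hxj'
      · exact Or.inr (by tauto)
    · rintro (rfl | hx)
      · push_neg
        exact ⟨hjj'.symm, hj'kk, hj'l⟩
      · tauto
  have hj'S : j' ∉ (Sᶜ : Finset (Fin (n + 1))) := by simp [hS]
  have hcompl' : ({j', kk, l}ᶜ : Finset (Fin (n + 1))) = insert j Sᶜ := by
    ext x
    simp only [hS, Finset.mem_compl, Finset.mem_insert, Finset.mem_singleton]
    constructor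
    · intro hx
      by_cases hxj : x = j
      · exact Or.inl hxj
      · exact Or.inr (by tauto)
    · rintro (rfl | hx)
      · push_neg
        exact ⟨hjj', hjkk, hjl⟩
      · tauto
  have hjS : j ∉ (Sᶜ : Finset (Fin (n + 1))) := by simp [hS]
  have hAj : φ (Agen n m a b j kk l) = ψ (a j') * u j 0 + ψ (b j') * u j 1 := by
    have h4 : Agen n m a b j kk l =
        C (a j') * (Xv n k j ^ m * Yv n k 0 * P) + C (b j') * (Xv n k j ^ m * Yv n k 1 * P) := by
      rw [Agen, hcompl, Finset.prod_insert hj'S, hP, L]; ring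
    rw [h4, hψ, hu]
    simp only [RingHom.coe_comp, Function.comp_apply, map_add, map_mul]
  have hAj' : φ (Agen n m a b j' kk l) = ψ (a j) * u j' 0 + ψ (b j) * u j' 1 := by
    have h4 : Agen n m a b j' kk l =
        C (a j) * (Xv n k j' ^ m * Yv n k 0 * P) + C (b j) * (Xv n k j' ^ m * Yv n k 1 * P) := by
      rw [Agen, hcompl', Finset.prod_insert hjS, hP, L]; ring
    rw [h4, hψ, hu]
    simp only [RingHom.coe_comp, Function.comp_apply, map_add, map_mul]
  -- cancellation
  have hq1 : (a j * b kk - a kk * b j) * (a j * b l - a l * b j) ≠ 0 :=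
    mul_ne_zero (hcross j kk hjkk) (hcross j l hjl)
  have hden : (a j * b kk - a kk * b j) * (a l * b j - a j * b l) ≠ 0 :=
    mul_ne_zero (hcross j kk hjkk) (hcross l j (Ne.symm hjl))
  have hkey : ((a j * b kk - a kk * b j) * (a j * b l - a l * b j)) *
      (((a j' * b kk - a kk * b j') * (a l * b j' - a j' * b l)) /
        ((a j * b kk - a kk * b j) * (a l * b j - a j * b l))) =
      (a j' * b kk - a kk * b j') * (a j' * b l - a l * b j') := by
    rw [mul_div_assoc', div_eq_iff hden]
    ring
  have hunit : IsUnit (ψ ((a j * b kk - a kk * b j) * (a j * b l - a l * b j))) := by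
    apply IsUnit.of_mul_eq_one (ψ (((a j * b kk - a kk * b j) * (a j * b l - a l * b j))⁻¹))
    rw [← map_mul, mul_inv_cancel₀ hq1, map_one]
  apply hunit.mul_left_cancel
  have hCc : φ (C (((a j' * b kk - a kk * b j') * (a l * b j' - a j' * b l)) /
            ((a j * b kk - a kk * b j) * (a l * b j - a j * b l))) * Agen n m a b j' kk l)
      = ψ (((a j' * b kk - a kk * b j') * (a l * b j' - a j' * b l)) /
            ((a j * b kk - a kk * b j) * (a l * b j - a j * b l))) * φ (Agen n m a b j' kk l) := by
    rw [hψ]; simp only [RingHom.coe_comp, Function.comp_apply, map_mul]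
  rw [hAj, hCc, hAj']
  rw [← mul_assoc, ← map_mul ψ, hkey]
  simp only [map_mul, map_sub]
  linear_combination main

lemma mono_two_mem (hm : 2 ≤ m) (hmk : (m : k) ≠ 0)
    (hcross : ∀ i j, i ≠ j → a i * b j - a j * b i ≠ 0)
    (d : Fin 2 ⊕ Fin (n + 1) →₀ ℕ) (c : k) (s : Fin 2) (hs : 1 ≤ d (Sum.inl s))
    {i i' : Fin (n + 1)} (hii' : i ≠ i') (hi : m - 1 ≤ d (Sum.inr i))
    (hi' : m - 1 ≤ d (Sum.inr i')) :
    (monomial d c : MvPolynomial (Fin 2 ⊕ Fin (n + 1)) k) ∈ jacIdeal n m a b := by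
  obtain ⟨e, he⟩ := Nat.exists_eq_add_of_le hi
  obtain ⟨e', he'⟩ := Nat.exists_eq_add_of_le hi'
  obtain ⟨f, hf⟩ := Nat.exists_eq_add_of_le hs
  have hmono : (monomial d c : MvPolynomial (Fin 2 ⊕ Fin (n + 1)) k) =
      (C c * (∏ s' ∈ Finset.univ.erase s, Yv n k s' ^ d (Sum.inl s')) * Yv n k s ^ f *
        (∏ t ∈ (Finset.univ.erase i).erase i', Xv n k t ^ d (Sum.inr t)) *
        (Xv n k i ^ e * Xv n k i' ^ e')) *
      (Yv n k s * Xv n k i ^ (m - 1) * Xv n k i' ^ (m - 1)) := by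
    rw [monomial_eq, Finsupp.prod_fintype _ _ (fun x => pow_zero _), Fintype.prod_sum_type,
      ← Finset.mul_prod_erase Finset.univ _ (Finset.mem_univ s),
      ← Finset.mul_prod_erase Finset.univ _ (Finset.mem_univ i),
      ← Finset.mul_prod_erase (Finset.univ.erase i) _
        (Finset.mem_erase.mpr ⟨Ne.symm hii', Finset.mem_univ i'⟩),
      he, he', hf]
    simp only [Yv, Xv]
    ring
  rw [hmono]
  exact Ideal.mul_mem_left _ _ (YXX_mem hmk hcross s hii')

lemma mono_one_mem (hn : 2 ≤ n) (hm : 2 ≤ m) (hmk : (m : k) ≠ 0)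
    (hcross : ∀ i j, i ≠ j → a i * b j - a j * b i ≠ 0)
    (d : Fin 2 ⊕ Fin (n + 1) →₀ ℕ) (c : k) (s : Fin 2) (hs : 1 ≤ d (Sum.inl s))
    (i0 : Fin (n + 1)) (hbig : 2 * m - 1 ≤ d (Sum.inr i0)) :
    (monomial d c : MvPolynomial (Fin 2 ⊕ Fin (n + 1)) k) ∈ jacIdeal n m a b := by
  have : Nontrivial (Fin (n + 1)) := Fin.nontrivial_iff_two_le.mpr (by omega)
  obtain ⟨t, ht⟩ := exists_ne i0
  obtain ⟨hr, hrm⟩ : d (Sum.inr i0) = m + (d (Sum.inr i0) - m) ∧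
      m - 1 ≤ d (Sum.inr i0) - m := ⟨by omega, by omega⟩
  set r := d (Sum.inr i0) - m with hrdef
  obtain ⟨f, hf⟩ := Nat.exists_eq_add_of_le hs
  set G := C c * (∏ s' ∈ Finset.univ.erase s, Yv n k s' ^ d (Sum.inl s')) * Yv n k s ^ f *
      (∏ t' ∈ Finset.univ.erase i0, Xv n k t' ^ d (Sum.inr t')) * Xv n k i0 ^ r with hG
  have hmono : (monomial d c : MvPolynomial (Fin 2 ⊕ Fin (n + 1)) k) =
      (G * Yv n k s) * Xv n k i0 ^ m := by
    rw [monomial_eq, Finsupp.prod_fintype _ _ (fun x => pow_zero _), Fintype.prod_sum_type,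
      ← Finset.mul_prod_erase Finset.univ _ (Finset.mem_univ s),
      ← Finset.mul_prod_erase Finset.univ _ (Finset.mem_univ i0),
      hf, hr, hG]
    simp only [Yv, Xv]
    ring
  have hrel : C (a i0 * b t - a t * b i0) * Xv n k i0 ^ m =
      C (b t) * fermat n m a - C (a t) * fermat n m b -
        ∑ i ∈ Finset.univ.erase i0, C (a i * b t - a t * b i) * Xv n k i ^ m := by
    have h1 : C (b t) * fermat n m a - C (a t) * fermat n m b =
        ∑ i, C (a i * b t - a t * b i) * Xv n k i ^ m := by
      rw [fermat, fermat, Finset.mul_sum, Finset.mul_sum, ← Finset.sum_sub_distrib]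
      exact Finset.sum_congr rfl fun i _ => by rw [map_sub, map_mul, map_mul]; ring
    rw [h1, ← Finset.sum_erase_add Finset.univ _ (Finset.mem_univ i0), add_sub_cancel_left]
  have hterm : ∀ i ∈ Finset.univ.erase i0,
      C (a i * b t - a t * b i) * ((G * Yv n k s) * Xv n k i ^ m) ∈ jacIdeal n m a b := by
    intro i hi
    have hine : i ≠ i0 := (Finset.mem_erase.mp hi).1
    have hXi : Xv n k i ^ m = Xv n k i ^ (m - 1) * Xv n k i := by
      conv_lhs => rw [show m = (m - 1) + 1 by omega]
      rw [pow_succ]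
    have hXr : Xv n k i0 ^ r = Xv n k i0 ^ (m - 1) * Xv n k i0 ^ (r - (m - 1)) := by
      conv_lhs => rw [show r = (m - 1) + (r - (m - 1)) by omega]
      rw [pow_add]
    have hsplit : C (a i * b t - a t * b i) * ((G * Yv n k s) * Xv n k i ^ m) =
        (C (a i * b t - a t * b i) * C c *
          (∏ s' ∈ Finset.univ.erase s, Yv n k s' ^ d (Sum.inl s')) * Yv n k s ^ f *
          (∏ t' ∈ Finset.univ.erase i0, Xv n k t' ^ d (Sum.inr t')) *
          Xv n k i0 ^ (r - (m - 1)) * Xv n k i) *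
        (Yv n k s * Xv n k i0 ^ (m - 1) * Xv n k i ^ (m - 1)) := by
      rw [hG, hXi, hXr]; ring
    rw [hsplit]
    exact Ideal.mul_mem_left _ _ (YXX_mem hmk hcross s (Ne.symm hine))
  apply cancelC (hcross i0 t (Ne.symm ht))
  have hfull : C (a i0 * b t - a t * b i0) * (monomial d c : MvPolynomial (Fin 2 ⊕ Fin (n + 1)) k) =
      (G * Yv n k s) * (C (b t) * fermat n m a - C (a t) * fermat n m b) -
        ∑ i ∈ Finset.univ.erase i0,
          C (a i * b t - a t * b i) * ((G * Yv n k s) * Xv n k i ^ m) := by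
    rw [hmono]
    calc C (a i0 * b t - a t * b i0) * ((G * Yv n k s) * Xv n k i0 ^ m)
        = (G * Yv n k s) * (C (a i0 * b t - a t * b i0) * Xv n k i0 ^ m) := by ring
      _ = (G * Yv n k s) * (C (b t) * fermat n m a - C (a t) * fermat n m b) -
          (G * Yv n k s) *
            ∑ i ∈ Finset.univ.erase i0, C (a i * b t - a t * b i) * Xv n k i ^ m := by
          rw [hrel]; ring
      _ = _ := by
          rw [Finset.mul_sum]
          congr 1
          exact Finset.sum_congr rfl fun i _ => by ring
  rw [hfull]
  exact sub_mem
    (Ideal.mul_mem_left _ _ (sub_mem (Ideal.mul_mem_left _ _ fermat_mem_a)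
      (Ideal.mul_mem_left _ _ fermat_mem_b)))
    (Ideal.sum_mem _ hterm)

lemma mono_mem (hn : 3 ≤ n) (hm : 2 ≤ m) (hmk : (m : k) ≠ 0)
    (hcross : ∀ i j, i ≠ j → a i * b j - a j * b i ≠ 0)
    (d : Fin 2 ⊕ Fin (n + 1) →₀ ℕ) (c : k)
    (hY : d (Sum.inl 0) + d (Sum.inl 1) = n - 2)
    (hX : ∑ i, d (Sum.inr i) = (n + 3) * m - 2 * (n + 1)) :
    (monomial d c : MvPolynomial (Fin 2 ⊕ Fin (n + 1)) k) ∈ jacIdeal n m a b := by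
  obtain ⟨s, hs⟩ : ∃ s : Fin 2, 1 ≤ d (Sum.inl s) := by
    by_cases h0 : 1 ≤ d (Sum.inl 0)
    · exact ⟨0, h0⟩
    · exact ⟨1, by omega⟩
  have hD : (n + 3) * m - 2 * (n + 1) = (n + 1) * (m - 2) + 2 * m := by
    obtain ⟨e, rfl⟩ : ∃ e, m = e + 2 := ⟨m - 2, by omega⟩
    have h0 : e + 2 - 2 = e := by omega
    rw [h0]
    have h1 : (n + 3) * (e + 2) = n * e + 3 * e + 2 * n + 6 := by ring
    have h2 : (n + 1) * e = n * e + e := by ring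
    omega
  rw [hD] at hX
  by_cases htwo : ∃ p : Fin (n + 1) × Fin (n + 1),
      p.1 ≠ p.2 ∧ m - 1 ≤ d (Sum.inr p.1) ∧ m - 1 ≤ d (Sum.inr p.2)
  · obtain ⟨⟨i, i'⟩, h1, h2, h3⟩ := htwo
    exact mono_two_mem hm hmk hcross d c s hs h1 h2 h3
  · push_neg at htwo
    have hA : ∃ A, (n + 1) * (m - 2) = A := ⟨_, rfl⟩
    obtain ⟨A, hA⟩ := hA
    rw [hA] at hX
    have hbig : ∃ i0, m - 1 ≤ d (Sum.inr i0) := by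
      by_contra hcon
      push_neg at hcon
      have hsum : ∑ i, d (Sum.inr i) ≤ (n + 1) * (m - 2) := by
        calc ∑ i, d (Sum.inr i) ≤ ∑ _i : Fin (n + 1), (m - 2) :=
            Finset.sum_le_sum fun i _ => by have := hcon i; omega
          _ = (n + 1) * (m - 2) := by
            rw [Finset.sum_const, Finset.card_univ, Fintype.card_fin, smul_eq_mul]
      rw [hA] at hsum
      omega
    obtain ⟨i0, hi0⟩ := hbig
    have hsmall : ∀ i, i ≠ i0 → d (Sum.inr i) ≤ m - 2 := by
      intro i hine
      by_contra hcon
      push_neg at hcon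
      have h5 := htwo (i, i0)
      dsimp only at h5
      have h6 := h5 hine (by omega)
      omega
    have hsum2 : ∑ i, d (Sum.inr i) =
        d (Sum.inr i0) + ∑ i ∈ Finset.univ.erase i0, d (Sum.inr i) := by
      rw [← Finset.sum_erase_add Finset.univ _ (Finset.mem_univ i0), add_comm]
    have hsum3 : ∑ i ∈ Finset.univ.erase i0, d (Sum.inr i) ≤ n * (m - 2) := by
      calc ∑ i ∈ Finset.univ.erase i0, d (Sum.inr i)
          ≤ ∑ _i ∈ Finset.univ.erase i0, (m - 2) :=
            Finset.sum_le_sum fun i hi => hsmall i (Finset.mem_erase.mp hi).1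
        _ = n * (m - 2) := by
            rw [Finset.sum_const, Finset.card_erase_of_mem (Finset.mem_univ i0),
              Finset.card_univ, Fintype.card_fin, smul_eq_mul, Nat.add_sub_cancel]
    have hB : ∃ B, n * (m - 2) = B := ⟨_, rfl⟩
    obtain ⟨B, hB⟩ := hB
    rw [hB] at hsum3
    have hAB : A = B + (m - 2) := by
      rw [← hA, ← hB]
      have : (n + 1) * (m - 2) = n * (m - 2) + (m - 2) := by ring
      omega
    have h2m : 2 * m - 1 ≤ d (Sum.inr i0) := by omega
    exact mono_one_mem (by omega) hm hmk hcross d c s hs i0 h2m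

lemma part2 (hn : 3 ≤ n) (hm : 2 ≤ m) (hmk : (m : k) ≠ 0)
    (hcross : ∀ i j, i ≠ j → a i * b j - a j * b i ≠ 0)
    {p : MvPolynomial (Fin 2 ⊕ Fin (n + 1)) k}
    (hp : p ∈ weightedHomogeneousSubmodule k
      (Sum.elim (fun _ : Fin 2 => ((1 : ℕ), (0 : ℕ)))
        (fun _ : Fin (n + 1) => ((0 : ℕ), (1 : ℕ))))
      ((n - 2, (n + 3) * m - 2 * (n + 1)) : ℕ × ℕ)) :
    p ∈ jacIdeal n m a b := by
  rw [mem_weightedHomogeneousSubmodule] at hp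
  rw [p.as_sum]
  apply Ideal.sum_mem
  intro d hd
  have hw := hp (mem_support_iff.mp hd)
  rw [Finsupp.weight_apply, Finsupp.sum_fintype] at hw
  swap
  · exact fun i => zero_smul ℕ _
  rw [Fintype.sum_sum_type] at hw
  simp only [Sum.elim_inl, Sum.elim_inr, Prod.smul_mk, smul_eq_mul, mul_one, mul_zero] at hw
  rw [← prod_mk_sum, ← prod_mk_sum, Finset.sum_const_zero, Finset.sum_const_zero,
    Prod.mk_add_mk, Prod.mk.injEq, add_zero, zero_add, Fin.sum_univ_two] at hw
  exact mono_mem hn hm hmk hcross d _ hw.1 hw.2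

end Aux

set_option maxHeartbeats 2000000 in
set_option synthInstance.maxHeartbeats 400000 in
/-- In the Jacobian ring `J` of the pencil of two generalized Fermat hypersurfaces, for
distinct `j, j' ∉ {k, l}` one has
`A_j = ((a_{j'}b_k − a_kb_{j'})(a_lb_{j'} − a_{j'}b_l))/((a_jb_k − a_kb_j)(a_lb_j − a_jb_l))·A_{j'}`;
in particular the bidegree-`(n−2, (n+3)m − 2(n+1))` graded piece of `J` is at most
one-dimensional over `k`. -/
theorem Agen_relation_and_dim (n m : ℕ) (hn : 2 ≤ n) (hm : 2 ≤ m) (hmk : (m : k) ≠ 0)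
    (a b : Fin (n + 1) → k) (ha : ∀ i, a i ≠ 0) (hb : ∀ i, b i ≠ 0)
    (hcross : ∀ i j, i ≠ j → a i * b j - a j * b i ≠ 0)
    (kk l j j' : Fin (n + 1)) (hkl : kk ≠ l)
    (hj : j ≠ kk ∧ j ≠ l) (hj' : j' ≠ kk ∧ j' ≠ l) (hjj' : j ≠ j') :
    Ideal.Quotient.mk (jacIdeal n m a b) (Agen n m a b j kk l) =
      Ideal.Quotient.mk (jacIdeal n m a b)
        (C (((a j' * b kk - a kk * b j') * (a l * b j' - a j' * b l)) /
            ((a j * b kk - a kk * b j) * (a l * b j - a j * b l))) *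
          Agen n m a b j' kk l) ∧
    Module.finrank k
      (Submodule.map (Ideal.Quotient.mkₐ k (jacIdeal n m a b)).toLinearMap
        (weightedHomogeneousSubmodule k
          (Sum.elim (fun _ : Fin 2 => ((1 : ℕ), (0 : ℕ)))
            (fun _ : Fin (n + 1) => ((0 : ℕ), (1 : ℕ))))
          ((n - 2, (n + 3) * m - 2 * (n + 1)) : ℕ × ℕ))) ≤ 1 := by
  have hn3 : 3 ≤ n := by
    by_contra hcon
    push_neg at hcon
    have e1 : (j : ℕ) ≠ (j' : ℕ) := fun h => hjj' (Fin.ext h)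
    have e2 : (j : ℕ) ≠ (kk : ℕ) := fun h => hj.1 (Fin.ext h)
    have e3 : (j : ℕ) ≠ (l : ℕ) := fun h => hj.2 (Fin.ext h)
    have e4 : (j' : ℕ) ≠ (kk : ℕ) := fun h => hj'.1 (Fin.ext h)
    have e5 : (j' : ℕ) ≠ (l : ℕ) := fun h => hj'.2 (Fin.ext h)
    have e6 : (kk : ℕ) ≠ (l : ℕ) := fun h => hkl (Fin.ext h)
    have l1 := j.isLt
    have l2 := j'.isLt
    have l3 := kk.isLt
    have l4 := l.isLt
    omega
  constructor
  · exact part1 n m hm hmk a b hcross kk l j j' hkl hj hj' hjj'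
  · have hbot : Submodule.map (Ideal.Quotient.mkₐ k (jacIdeal n m a b)).toLinearMap
        (weightedHomogeneousSubmodule k
          (Sum.elim (fun _ : Fin 2 => ((1 : ℕ), (0 : ℕ)))
            (fun _ : Fin (n + 1) => ((0 : ℕ), (1 : ℕ))))
          ((n - 2, (n + 3) * m - 2 * (n + 1)) : ℕ × ℕ)) = ⊥ := by
      rw [Submodule.eq_bot_iff]
      rintro x ⟨p, hp, rfl⟩
      show (Ideal.Quotient.mkₐ k (jacIdeal n m a b)) p = 0
      rw [Ideal.Quotient.mkₐ_eq_mk, Ideal.Quotient.eq_zero_iff_mem]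
      exact part2 hn3 hm hmk hcross hp
    rw [hbot, finrank_bot]
    omega


end FermatPencil
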